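/- Let G be a simple graph on a finite vertex type V with edge weights w : Sym2 V → ℝ, and let F be a minimum spanning forest of G. Then for every real threshold t and all vertices u, v ∈ V: u and v are reachable in the spanning subgraph of G consisting of the edges of G of weight at most t if and only if u and v are reachable in the spanning subgraph consisting of the edges of F of weight at most t. -/

import Mathlib

/-- `F` is a spanning forest of `H`: a spanning subgraph (edges a subset of those of `H`)
that is acyclic and has the same reachability relation as `H`. -/
def IsSpanningForest {V : Type*} (H F : SimpleGraph V) : Prop :=
  F ≤ H ∧ F.IsAcyclic ∧ ∀ u v : V, F.Reachable u v ↔ H.Reachable u v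

/-- The total weight of the edges of a graph. -/
noncomputable def totalWeight {V : Type*} (w : Sym2 V → ℝ) (F : SimpleGraph V) : ℝ :=
  ∑ᶠ e ∈ F.edgeSet, w e

/-- `F` is a minimum spanning forest of `H` with respect to the weights `w`. -/
def IsMSF {V : Type*} (w : Sym2 V → ℝ) (H F : SimpleGraph V) : Prop :=
  IsSpanningForest H F ∧
    ∀ F' : SimpleGraph V, IsSpanningForest H F' → totalWeight w F ≤ totalWeight w F'

/-- The spanning subgraph `G_{≤ t}` of `G` consisting of the edges of `G` of weight at most `t`. -/
def leSub {V : Type*} (w : Sym2 V → ℝ) (G : SimpleGraph V) (t : ℝ) : SimpleGraph V :=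
  SimpleGraph.fromEdgeSet {e ∈ G.edgeSet | w e ≤ t}

open SimpleGraph

section Aux

variable {V : Type*}

lemma leSub_adj {w : Sym2 V → ℝ} {G : SimpleGraph V} {t : ℝ} {a b : V} :
    (leSub w G t).Adj a b ↔ G.Adj a b ∧ w s(a, b) ≤ t := by
  simp only [leSub, fromEdgeSet_adj, Set.mem_setOf_eq, mem_edgeSet]
  constructor
  · rintro ⟨⟨h1, h2⟩, _⟩; exact ⟨h1, h2⟩
  · rintro ⟨h1, h2⟩; exact ⟨⟨h1, h2⟩, h1.ne⟩

lemma leSub_mono {w : Sym2 V → ℝ} {G H : SimpleGraph V} {t : ℝ} (h : G ≤ H) :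
    leSub w G t ≤ leSub w H t := by
  intro a b hab
  rw [leSub_adj] at hab ⊢
  exact ⟨h hab.1, hab.2⟩

lemma reachable_of_adj_reachable {G H : SimpleGraph V}
    (h : ∀ a b : V, G.Adj a b → H.Reachable a b) {u v : V}
    (r : G.Reachable u v) : H.Reachable u v := by
  obtain ⟨p⟩ := r
  induction p with
  | nil => exact Reachable.refl _
  | cons ha _ ih => exact (h _ _ ha).trans ih

lemma isAcyclic_mono {G H : SimpleGraph V} (hGH : G ≤ H) (h : H.IsAcyclic) : G.IsAcyclic := by
  intro v c hc
  have hsub : ∀ e ∈ c.edges, e ∈ H.edgeSet := fun e he =>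
    edgeSet_mono hGH (c.edges_subset_edgeSet he)
  exact h (c.transfer H hsub) (hc.transfer hsub)

lemma isAcyclic_sup_edge {D : SimpleGraph V} (hD : D.IsAcyclic) {a b : V}
    (hab : ¬ D.Reachable a b) : (D ⊔ edge a b).IsAcyclic := by
  have hne : a ≠ b := by rintro rfl; exact hab (Reachable.refl _)
  intro u c hc
  by_cases he : s(a, b) ∈ c.edges
  · have h2 := (adj_and_reachable_delete_edges_iff_exists_cycle.mpr ⟨u, c, hc, he⟩).2
    apply hab
    refine h2.mono ?_
    intro p q hpq
    rcases hpq with ⟨hpq1, hpq2⟩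
    rcases hpq1 with h | h
    · exact h
    · exact absurd h hpq2
  · have hsub : ∀ e ∈ c.edges, e ∈ D.edgeSet := by
      intro e hce
      have hmem := c.edges_subset_edgeSet hce
      rw [edgeSet_sup] at hmem
      rcases hmem with h | h
      · exact h
      · rw [edge_edgeSet_of_ne hne] at h
        exact absurd (h ▸ hce) he
    exact hD (c.transfer D hsub) (hc.transfer hsub)

/-- Splitting a trail at an edge it contains. -/
lemma walk_split {G : SimpleGraph V} {x y : V} :
    ∀ {a b : V} (p : G.Walk a b), p.IsTrail → s(x, y) ∈ p.edges →
    ((G.deleteEdges {s(x, y)}).Reachable a x ∧ (G.deleteEdges {s(x, y)}).Reachable y b) ∨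
    ((G.deleteEdges {s(x, y)}).Reachable a y ∧ (G.deleteEdges {s(x, y)}).Reachable x b) := by
  intro a b p
  induction p with
  | nil => intro _ h; simp at h
  | @cons a c b ha q ih =>
    intro htrail hmem
    rw [Walk.isTrail_cons] at htrail
    rw [Walk.edges_cons, List.mem_cons] at hmem
    rcases hmem with heq | hmem
    · have hq : ∀ e ∈ q.edges, e ∈ (G.deleteEdges {s(x, y)}).edgeSet := by
        intro e hqe
        rw [edgeSet_deleteEdges]
        refine ⟨q.edges_subset_edgeSet hqe, ?_⟩
        intro hsing
        rw [Set.mem_singleton_iff] at hsing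
        rw [hsing, heq] at hqe
        exact htrail.2 hqe
      have hcb : (G.deleteEdges {s(x, y)}).Reachable c b := ⟨q.transfer _ hq⟩
      rw [Sym2.eq_iff] at heq
      rcases heq with ⟨rfl, rfl⟩ | ⟨rfl, rfl⟩
      · exact Or.inl ⟨Reachable.refl _, hcb⟩
      · exact Or.inr ⟨Reachable.refl _, hcb⟩
    · have hne : s(a, c) ≠ s(x, y) := fun h0 => htrail.2 (by rw [h0]; exact hmem)
      have hac : (G.deleteEdges {s(x, y)}).Adj a c := by
        rw [deleteEdges_adj]
        exact ⟨ha, by simpa using hne⟩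
      rcases ih htrail.1 hmem with ⟨h1, h2⟩ | ⟨h1, h2⟩
      · exact Or.inl ⟨hac.reachable.trans h1, h2⟩
      · exact Or.inr ⟨hac.reachable.trans h1, h2⟩

variable [Fintype V]

/-- The exchange argument. -/
lemma exchange {w : Sym2 V → ℝ} {G F : SimpleGraph V} (hmsf : IsMSF w G F) {a b x y : V}
    (hab : G.Adj a b) (hnadj : ¬ F.Adj a b) (hxy : F.Adj x y)
    (hax : (F.deleteEdges {s(x, y)}).Reachable a x)
    (hyb : (F.deleteEdges {s(x, y)}).Reachable y b)
    (hlt : w s(a, b) < w s(x, y)) : False := by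
  classical
  have hFle := hmsf.1.1
  have hFac := hmsf.1.2.1
  have hFreach := hmsf.1.2.2
  have hmin := hmsf.2
  set D := F.deleteEdges {s(x, y)} with hDdef
  set F' := D ⊔ edge a b with hF'def
  have habne : a ≠ b := hab.ne
  have hxyne : x ≠ y := hxy.ne
  have hDF : D ≤ F := sdiff_le
  have hnDxy : ¬ D.Reachable x y := by
    have hb := (isAcyclic_iff_forall_adj_isBridge.mp hFac) hxy
    exact hb
  have hnDab : ¬ D.Reachable a b := fun h => hnDxy ((hax.symm.trans h).trans hyb.symm)
  have hF'le : F' ≤ G := by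
    refine sup_le (hDF.trans hFle) ?_
    intro p q hpq
    rw [edge_adj] at hpq
    rcases hpq.1 with ⟨rfl, rfl⟩ | ⟨rfl, rfl⟩
    · exact hab
    · exact hab.symm
  have hDleF' : D ≤ F' := le_sup_left
  have habF' : F'.Reachable a b := by
    have : F'.Adj a b := by
      rw [hF'def, sup_adj, edge_adj]
      exact Or.inr ⟨Or.inl ⟨rfl, rfl⟩, habne⟩
    exact this.reachable
  have hxyF' : F'.Reachable x y :=
    ((hax.symm.mono hDleF').trans habF').trans (hyb.symm.mono hDleF')
  have hF'ac : F'.IsAcyclic := isAcyclic_sup_edge (isAcyclic_mono hDF hFac) hnDab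
  have hF'reach : ∀ u v : V, F'.Reachable u v ↔ G.Reachable u v := by
    intro u v
    constructor
    · exact fun h => h.mono hF'le
    · intro h
      rw [← hFreach] at h
      refine reachable_of_adj_reachable ?_ h
      intro p q hpq
      by_cases hpq' : s(p, q) = s(x, y)
      · rw [Sym2.eq_iff] at hpq'
        rcases hpq' with ⟨rfl, rfl⟩ | ⟨rfl, rfl⟩
        · exact hxyF'
        · exact hxyF'.symm
      · have hD : D.Adj p q := by
          rw [hDdef, deleteEdges_adj]
          exact ⟨hpq, by simpa using hpq'⟩
        exact hD.reachable.mono hDleF'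
  have hsf : IsSpanningForest G F' := ⟨hF'le, hF'ac, hF'reach⟩
  have hfinF : F.edgeSet.Finite := Set.toFinite _
  have hxymem : s(x, y) ∈ hfinF.toFinset := by
    rw [Set.Finite.mem_toFinset]; exact hxy
  have habnmem : s(a, b) ∉ hfinF.toFinset := by
    rw [Set.Finite.mem_toFinset]; exact hnadj
  have hE' : F'.edgeSet = ↑(insert s(a, b) (hfinF.toFinset.erase s(x, y))) := by
    rw [hF'def, edgeSet_sup, hDdef, edgeSet_deleteEdges, edge_edgeSet_of_ne habne]
    rw [Finset.coe_insert, Finset.coe_erase, Set.Finite.coe_toFinset]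
    rw [Set.union_comm, Set.insert_eq]
  have hwF : totalWeight w F = ∑ e ∈ hfinF.toFinset, w e := by
    rw [totalWeight, ← finsum_mem_coe_finset, Set.Finite.coe_toFinset]
  have hwF' : totalWeight w F' = w s(a, b) + (∑ e ∈ hfinF.toFinset, w e - w s(x, y)) := by
    rw [totalWeight, hE', finsum_mem_coe_finset,
      Finset.sum_insert (fun h => habnmem (Finset.mem_of_mem_erase h)),
      Finset.sum_erase_eq_sub hxymem]
  have hle := hmin F' hsf
  rw [hwF, hwF'] at hle
  linarith

lemma key_reach {w : Sym2 V → ℝ} {G F : SimpleGraph V} (hmsf : IsMSF w G F) {t : ℝ} {a b : V}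
    (hab : G.Adj a b) (hw : w s(a, b) ≤ t) : (leSub w F t).Reachable a b := by
  classical
  by_contra h
  have hFreach := hmsf.1.2.2
  have hnadj : ¬ F.Adj a b := by
    intro hadj
    exact h (Adj.reachable (leSub_adj.mpr ⟨hadj, hw⟩))
  have hreach : F.Reachable a b := (hFreach a b).mpr hab.reachable
  obtain ⟨pw⟩ := hreach
  let p := pw.toPath
  have hex : ∃ f ∈ (p : F.Walk a b).edges, ¬ w f ≤ t := by
    by_contra hall
    push_neg at hall
    apply h
    refine ⟨(p : F.Walk a b).transfer _ ?_⟩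
    intro e he
    have hmem := (p : F.Walk a b).edges_subset_edgeSet he
    rw [leSub, edgeSet_fromEdgeSet]
    exact ⟨⟨hmem, hall e he⟩, F.not_isDiag_of_mem_edgeSet hmem⟩
  obtain ⟨f, hfmem, hfw⟩ := hex
  have hfF : f ∈ F.edgeSet := (p : F.Walk a b).edges_subset_edgeSet hfmem
  induction f using Sym2.ind with
  | _ x y =>
  have hxy : F.Adj x y := hfF
  have hlt : w s(a, b) < w s(x, y) := lt_of_le_of_lt hw (lt_of_not_ge hfw)
  rcases walk_split (p : F.Walk a b) p.2.isTrail hfmem with ⟨h1, h2⟩ | ⟨h1, h2⟩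
  · exact exchange hmsf hab hnadj hxy h1 h2 hlt
  · have hswap : ({s(y, x)} : Set (Sym2 V)) = {s(x, y)} := by rw [Sym2.eq_swap]
    have e2 : s(y, x) = s(x, y) := Sym2.eq_swap
    exact exchange (a := a) (b := b) (x := y) (y := x) hmsf hab hnadj hxy.symm
      (by rw [hswap]; exact h1) (by rw [hswap]; exact h2) (by rw [e2]; exact hlt)

end Aux

theorem msf_threshold_reachable {V : Type*} [Fintype V] (G : SimpleGraph V) (w : Sym2 V → ℝ)
    (F : SimpleGraph V) (hF : IsMSF w G F) (t : ℝ) (u v : V) :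
    (leSub w G t).Reachable u v ↔ (leSub w F t).Reachable u v := by
  constructor
  · refine reachable_of_adj_reachable ?_
    intro a b hab
    rw [leSub_adj] at hab
    exact key_reach hF hab.1 hab.2
  · exact fun h => h.mono (leSub_mono hF.1.1)
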